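/- arXiv:1612.06023 — 11 statements merged into one kernel-verified Lean document; each statement's English description precedes it below -/
import Mathlib

section
/- Let x, y, a, b be real numbers with x·y ≤ 0, |2x + y| ≤ a and |x − y| ≤ b. If 2a < b, then 4xy + x² + y² ≥ (2a² − 2ab − b²)/3. -/
theorem stmt_0 (x y a b : ℝ) (hxy : x * y ≤ 0)
    (h1 : |2 * x + y| ≤ a) (h2 : |x - y| ≤ b) (h3 : 2 * a < b) :
    4 * x * y + x ^ 2 + y ^ 2 ≥ (2 * a ^ 2 - 2 * a * b - b ^ 2) / 3 := by
  obtain ⟨h1a, h1b⟩ := abs_le.mp h1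
  obtain ⟨h2a, h2b⟩ := abs_le.mp h2
  have ha : 0 ≤ a := le_trans (abs_nonneg _) h1
  have hb : 0 ≤ b := le_trans (abs_nonneg _) h2
  nlinarith [mul_nonneg (sub_nonneg.mpr h1b) (sub_nonneg.mpr h2b),
    mul_nonneg (sub_nonneg.mpr h1b) (by linarith : (0:ℝ) ≤ (x - y) + b),
    mul_nonneg (by linarith : (0:ℝ) ≤ (2*x+y) + a) (sub_nonneg.mpr h2b),
    mul_nonneg (by linarith : (0:ℝ) ≤ (2*x+y) + a) (by linarith : (0:ℝ) ≤ (x - y) + b),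
    mul_nonneg (sub_nonneg.mpr h1b) (by linarith : (0:ℝ) ≤ (2*x+y) + a),
    mul_nonneg (sub_nonneg.mpr h2b) (by linarith : (0:ℝ) ≤ (x - y) + b),
    sq_nonneg (2*x+y), sq_nonneg (x-y), sq_nonneg (x+y), hxy,
    mul_nonneg ha hb, sq_nonneg (b - 2*a), h3.le]
end

section
/- Let x, y, a, b be real numbers with x·y ≤ 0, |2x + y| ≤ a and |x − y| ≤ b. If 2a ≥ b, then 4xy + x² + y² ≥ −b²/2. -/
theorem stmt_1 (x y a b : ℝ) (hxy : x * y ≤ 0)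
    (h1 : |2 * x + y| ≤ a) (h2 : |x - y| ≤ b) (h3 : 2 * a ≥ b) :
    4 * x * y + x ^ 2 + y ^ 2 ≥ -b ^ 2 / 2 := by
  have hb : (x - y) ^ 2 ≤ b ^ 2 := by
    have := abs_nonneg (x - y)
    nlinarith [sq_abs (x - y)]
  nlinarith [sq_nonneg (x + y)]
end

section
/- Let λ₂, λ₃, μ₂, μ₃, α, δ be real numbers with −λ₃/2 ≤ λ₂ ≤ λ₃, −μ₃/2 ≤ μ₂ ≤ μ₃, λ₃ + λ₂ + μ₃ + μ₂ = 2(α − 2/3), λ₃ − λ₂ + μ₃ − μ₂ = δ, δ ≥ 0 and α > 0. Then √2·(√(λ₃² + λ₂² + λ₂λ₃) + √(μ₃² + μ₂² + μ₂μ₃)) ≤ (6α − 4 + δ)/√6. -/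
lemma sqrt_quad_le (a b : ℝ) (h1 : -b / 2 ≤ a) (h2 : a ≤ b) :
    Real.sqrt (b ^ 2 + a ^ 2 + a * b) ≤ (2 * b + a) / Real.sqrt 3 := by
  have hb : 0 ≤ b := by linarith
  have hba : 0 ≤ 2 * b + a := by linarith
  have hle : b ^ 2 + a ^ 2 + a * b ≤ (2 * b + a) ^ 2 / 3 := by
    nlinarith [mul_nonneg (by linarith : (0:ℝ) ≤ b - a) (by linarith : (0:ℝ) ≤ b + 2 * a)]
  calc Real.sqrt (b ^ 2 + a ^ 2 + a * b) ≤ Real.sqrt ((2 * b + a) ^ 2 / 3) :=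
        Real.sqrt_le_sqrt hle
    _ = (2 * b + a) / Real.sqrt 3 := by
        rw [Real.sqrt_div (by positivity), Real.sqrt_sq hba]

theorem stmt_3 (l2 l3 m2 m3 α δ : ℝ)
    (hl1 : -l3 / 2 ≤ l2) (hl2 : l2 ≤ l3)
    (hm1 : -m3 / 2 ≤ m2) (hm2 : m2 ≤ m3)
    (hsum : l3 + l2 + m3 + m2 = 2 * (α - 2 / 3))
    (hdiff : l3 - l2 + m3 - m2 = δ)
    (hδ : δ ≥ 0) (hα : α > 0) :
    Real.sqrt 2 * (Real.sqrt (l3 ^ 2 + l2 ^ 2 + l2 * l3) +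
      Real.sqrt (m3 ^ 2 + m2 ^ 2 + m2 * m3)) ≤ (6 * α - 4 + δ) / Real.sqrt 6 := by
  have hA := sqrt_quad_le l2 l3 hl1 hl2
  have hB := sqrt_quad_le m2 m3 hm1 hm2
  have hnum : 6 * α - 4 + δ = (4 * l3 + 2 * l2) + (4 * m3 + 2 * m2) := by linarith
  have s2 : Real.sqrt 2 ^ 2 = 2 := Real.sq_sqrt (by norm_num)
  have s3 : Real.sqrt 3 ^ 2 = 3 := Real.sq_sqrt (by norm_num)
  have h6 : Real.sqrt 6 = Real.sqrt 2 * Real.sqrt 3 := by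
    rw [← Real.sqrt_mul (by norm_num)]; norm_num
  have hs2 : (0:ℝ) < Real.sqrt 2 := Real.sqrt_pos.mpr (by norm_num)
  have hs3 : (0:ℝ) < Real.sqrt 3 := Real.sqrt_pos.mpr (by norm_num)
  rw [hnum, h6]
  have hAB : Real.sqrt (l3 ^ 2 + l2 ^ 2 + l2 * l3) + Real.sqrt (m3 ^ 2 + m2 ^ 2 + m2 * m3)
      ≤ ((2 * l3 + l2) + (2 * m3 + m2)) / Real.sqrt 3 := by
    rw [add_div]; exact add_le_add hA hB
  calc Real.sqrt 2 * (Real.sqrt (l3 ^ 2 + l2 ^ 2 + l2 * l3) +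
        Real.sqrt (m3 ^ 2 + m2 ^ 2 + m2 * m3))
      ≤ Real.sqrt 2 * (((2 * l3 + l2) + (2 * m3 + m2)) / Real.sqrt 3) :=
        mul_le_mul_of_nonneg_left hAB hs2.le
    _ = (4 * l3 + 2 * l2 + (4 * m3 + 2 * m2)) / (Real.sqrt 2 * Real.sqrt 3) := by
        field_simp
        linear_combination (2 * l3 + l2 + (2 * m3 + m2)) * s2
end

section
/- Let λ₂, λ₃, μ₂, μ₃, α, δ be real numbers with −λ₃/2 ≤ λ₂ ≤ λ₃, −μ₃/2 ≤ μ₂ ≤ μ₃, λ₃ + λ₂ + μ₃ + μ₂ = 2(α − 2/3), λ₃ − λ₂ + μ₃ − μ₂ = δ, δ ≥ 0 and α > 0. Then 2(λ₃² + λ₂² + λ₂λ₃) + 2(μ₃² + μ₂² + μ₂μ₃) ≤ (1/2)·(12α² − 16α + 16/3 + δ²). -/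
theorem stmt_4 (l2 l3 m2 m3 α δ : ℝ)
    (hl1 : -l3 / 2 ≤ l2) (hl2 : l2 ≤ l3)
    (hm1 : -m3 / 2 ≤ m2) (hm2 : m2 ≤ m3)
    (hsum : l3 + l2 + m3 + m2 = 2 * (α - 2 / 3))
    (hdiff : l3 - l2 + m3 - m2 = δ)
    (hδ : δ ≥ 0) (hα : α > 0) :
    2 * (l3 ^ 2 + l2 ^ 2 + l2 * l3) + 2 * (m3 ^ 2 + m2 ^ 2 + m2 * m3) ≤
      (1 / 2) * (12 * α ^ 2 - 16 * α + 16 / 3 + δ ^ 2) := by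
  have h1 : 0 ≤ l2 + l3 := by linarith
  have h2 : 0 ≤ m2 + m3 := by linarith
  nlinarith [mul_nonneg h1 h2, mul_nonneg (sub_nonneg.2 hl2) (sub_nonneg.2 hm2)]
end

section
/- Let p, q, m, n, A, D be real numbers satisfying p + m = A, q + n = D, 0 ≤ q ≤ 3p and 0 ≤ n ≤ 3m. Then √(3p² + q²) + √(3m² + n²) ≤ (3A + D)/√3. -/
lemma aux_sqrt_le (p q : ℝ) (hq0 : 0 ≤ q) (hq3 : q ≤ 3 * p) :
    Real.sqrt (3 * p ^ 2 + q ^ 2) ≤ (3 * p + q) / Real.sqrt 3 := by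
  have hs : Real.sqrt 3 > 0 := Real.sqrt_pos.mpr (by norm_num)
  have hnn : 0 ≤ (3 * p + q) / Real.sqrt 3 := by apply div_nonneg (by linarith) hs.le
  rw [show (3 * p + q) / Real.sqrt 3 = Real.sqrt (((3 * p + q) / Real.sqrt 3) ^ 2) from
    (Real.sqrt_sq hnn).symm]
  apply Real.sqrt_le_sqrt
  rw [div_pow, Real.sq_sqrt (by norm_num : (3:ℝ) ≥ 0)]
  rw [le_div_iff₀ (by norm_num)]
  nlinarith [mul_nonneg hq0 (sub_nonneg.mpr hq3)]

theorem stmt_5 (p q m n A D : ℝ)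
    (h1 : p + m = A) (h2 : q + n = D)
    (hq0 : 0 ≤ q) (hq3 : q ≤ 3 * p)
    (hn0 : 0 ≤ n) (hn3 : n ≤ 3 * m) :
    Real.sqrt (3 * p ^ 2 + q ^ 2) + Real.sqrt (3 * m ^ 2 + n ^ 2) ≤
      (3 * A + D) / Real.sqrt 3 := by
  have h := aux_sqrt_le p q hq0 hq3
  have h' := aux_sqrt_le m n hn0 hn3
  have : (3 * A + D) / Real.sqrt 3 = (3 * p + q) / Real.sqrt 3 + (3 * m + n) / Real.sqrt 3 := by
    rw [← add_div]; ring_nf; rw [← h1, ← h2]; ring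
  rw [this]; linarith
end

section
/- Let a₁, a₂, a₃, b₁, b₂, b₃ be real numbers satisfying: a₁ ≤ a₂ ≤ a₃, a₁ + a₂ + a₃ = 1, b₁ + b₂ + b₃ = 0, |b₂ − b₁| ≤ a₂ − a₁, |b₃ − b₁| ≤ a₃ − a₁, |b₃ − b₂| ≤ a₃ − a₂, and a₁² + b₁² + 2(a₂a₃ + b₂b₃) ≤ a₁. If a₃ = α ≤ 1, then 4a₂ ≤ a₁ + 1 and a₁ ≥ (15 − 8α − √3·√(96α² − 80α + 19))/28. -/
set_option maxHeartbeats 1000000 in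
theorem stmt_7 (a1 a2 a3 b1 b2 b3 α : ℝ)
    (h12 : a1 ≤ a2) (h23 : a2 ≤ a3) (hasum : a1 + a2 + a3 = 1)
    (hbsum : b1 + b2 + b3 = 0)
    (hb21 : |b2 - b1| ≤ a2 - a1) (hb31 : |b3 - b1| ≤ a3 - a1)
    (hb32 : |b3 - b2| ≤ a3 - a2)
    (hmin : a1 ^ 2 + b1 ^ 2 + 2 * (a2 * a3 + b2 * b3) ≤ a1)
    (ha3 : a3 = α) (hα : α ≤ 1) :
    4 * a2 ≤ a1 + 1 ∧
      a1 ≥ (15 - 8 * α - Real.sqrt 3 * Real.sqrt (96 * α ^ 2 - 80 * α + 19)) / 28 := by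
  obtain ⟨l21, u21⟩ := abs_le.mp hb21
  obtain ⟨l31, u31⟩ := abs_le.mp hb31
  obtain ⟨l32, u32⟩ := abs_le.mp hb32
  subst ha3
  have hb1e : b1 = -b2 - b3 := by linarith
  subst hb1e
  -- Part 1
  have hf : a1 - a1^2 - 2*(a2*a3) + (a3-a2)^2/2 ≥ 0 := by
    nlinarith [sq_nonneg (-b2-b3), sq_nonneg (b2+b3),
      mul_nonneg (sub_nonneg.mpr u32) (by linarith : (0:ℝ) ≤ a3 - a2 + (b3 - b2))]
  have hp1 : 4 * a2 ≤ a1 + 1 := by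
    by_cases hc : 2*(a2-a1) ≤ a3 - a2
    · linarith
    · push_neg at hc
      nlinarith [sq_nonneg (a2-a1), sq_nonneg (a3-a2),
        mul_nonneg (sub_nonneg.mpr h12) (sub_nonneg.mpr h23),
        sq_nonneg (a3-a2-2*(a2-a1)),
        mul_nonneg (sub_nonneg.mpr h12) (sub_nonneg.mpr hα)]
  refine ⟨hp1, ?_⟩
  have hd : (0:ℝ) ≤ a2 - a1 := by linarith
  have he : (0:ℝ) ≤ a3 - a2 := by linarith
  have he2 : 2*(a2-a1) ≤ a3 - a2 := by linarith
  -- key2 : sharper lower bound for the b-part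
  have key2 : (a3 - a2 - 2*(a2-a1))^2 - 3*(a3-a2)^2 ≤ 6*((-b2-b3)^2 + 2*(b2*b3)) := by
    have hA : (0:ℝ) ≤ a2 - a1 - (b2 - (-b2-b3)) := by linarith
    have hB : (0:ℝ) ≤ a2 - a1 + (b2 - (-b2-b3)) := by linarith
    have hN : (0:ℝ) ≤ a3 - a2 + (b3 - b2) := by linarith
    have hP : (0:ℝ) ≤ a3 - a2 - (b3 - b2) := by linarith
    rcases le_or_gt (b3 - (-b2-b3) + (a2 - a1)) 0 with hc1 | hc1
    · nlinarith [mul_nonneg hN (by linarith : (0:ℝ) ≤ a3 - a2 - (b3-b2) + 2*(a2-a1)),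
        mul_nonneg hA (by linarith : (0:ℝ) ≤ -(b3 - (-b2-b3) + (a2 - a1)))]
    · rcases le_or_gt (b3 - (-b2-b3)) (a2 - a1) with hc2 | hc2
      · -- |b3 - (-b2-b3)| ≤ a2 - a1
        nlinarith [sq_nonneg (b2+b3),
          mul_nonneg (by linarith : (0:ℝ) ≤ 2*(a2-a1) - (b3-b2)) (by linarith : (0:ℝ) ≤ 2*(a2-a1) + (b3-b2)),
          mul_nonneg (by linarith : (0:ℝ) ≤ a3 - a2 - 2*(a2-a1)) (by linarith : (0:ℝ) ≤ 2*(a3-a2) + 8*(a2-a1))]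
      · nlinarith [mul_nonneg hP (by linarith : (0:ℝ) ≤ a3 - a2 + (b3-b2) + 2*(a2-a1)),
          mul_nonneg hB (by linarith : (0:ℝ) ≤ (b3 - (-b2-b3)) - (a2 - a1))]
  have ha2 : a2 = 1 - a1 - a3 := by linarith
  subst ha2
  -- the quadratic inequality
  have hQ : 14*a1^2 + 8*a1*a3 - 15*a1 - 4*a3^2 + 3 ≤ 0 := by nlinarith [hmin, key2]
  have hD : (0:ℝ) ≤ 96 * a3 ^ 2 - 80 * a3 + 19 := by nlinarith [sq_nonneg (a3 - 5/12)]
  have h3D : Real.sqrt 3 * Real.sqrt (96 * a3 ^ 2 - 80 * a3 + 19)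
      = Real.sqrt (3*(96 * a3 ^ 2 - 80 * a3 + 19)) := (Real.sqrt_mul (by norm_num) _).symm
  rw [h3D]
  have hsnn : 0 ≤ Real.sqrt (3*(96 * a3 ^ 2 - 80 * a3 + 19)) := Real.sqrt_nonneg _
  have hs : Real.sqrt (3*(96 * a3 ^ 2 - 80 * a3 + 19)) ^ 2 = 3*(96 * a3 ^ 2 - 80 * a3 + 19) :=
    Real.sq_sqrt (by linarith)
  have key : 15 - 8*a3 - 28*a1 ≤ Real.sqrt (3*(96 * a3 ^ 2 - 80 * a3 + 19)) := by
    rcases le_or_gt (15 - 8*a3 - 28*a1) 0 with h0 | h0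
    · linarith
    · have h2 : (15 - 8*a3 - 28*a1)^2 ≤ 3*(96 * a3 ^ 2 - 80 * a3 + 19) := by nlinarith [hQ]
      exact (Real.le_sqrt h0.le (by linarith)).mpr h2
  linarith
end

section
/- Let a₁, a₂, a₃, b₁, b₂, b₃ be real numbers satisfying: a₁ ≤ a₂ ≤ a₃, a₁ + a₂ + a₃ = 1, b₁ + b₂ + b₃ = 0, |b₂ − b₁| ≤ a₂ − a₁, |b₃ − b₁| ≤ a₃ − a₁, |b₃ − b₂| ≤ a₃ − a₂, and a₁² + b₁² + 2(a₂a₃ + b₂b₃) ≤ a₁. If a₃ ≤ √3/2, then a₁ ≥ 0. -/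
theorem stmt_8 (a1 a2 a3 b1 b2 b3 : ℝ)
    (h12 : a1 ≤ a2) (h23 : a2 ≤ a3) (hasum : a1 + a2 + a3 = 1)
    (hbsum : b1 + b2 + b3 = 0)
    (hb21 : |b2 - b1| ≤ a2 - a1) (hb31 : |b3 - b1| ≤ a3 - a1)
    (hb32 : |b3 - b2| ≤ a3 - a2)
    (hmin : a1 ^ 2 + b1 ^ 2 + 2 * (a2 * a3 + b2 * b3) ≤ a1)
    (ha3 : a3 ≤ Real.sqrt 3 / 2) :
    a1 ≥ 0 := by
  by_contra hneg
  push_neg at hneg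
  have ha2 : a2 = 1 - a1 - a3 := by linarith
  subst ha2
  have hb3 : b3 = -b1 - b2 := by linarith
  subst hb3
  have hs2 : (Real.sqrt 3) ^ 2 = 3 := Real.sq_sqrt (by norm_num)
  have hs0 : (0:ℝ) ≤ Real.sqrt 3 := Real.sqrt_nonneg 3
  have hs4 : Real.sqrt 3 ≤ 7/4 := by nlinarith
  have ha3pos : (1:ℝ)/3 ≤ a3 := by linarith
  have ht : 1 - Real.sqrt 3 ≤ a1 := by nlinarith
  obtain ⟨hq1, hq2⟩ := abs_le.mp hb21
  obtain ⟨hd1, hd2⟩ := abs_le.mp hb32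
  have c3 : (-b1 - 2*b2) ^ 2 ≤ (2*a3 - 1 + a1) ^ 2 := by nlinarith
  rcases le_total (2*a3 - 1 + a1) (2 * ((1 - a1 - a3) - a1)) with hcase | hcase
  · -- case d ≤ 2q
    have key : -((2*a3 - 1 + a1)) ^ 2 / 2 ≤ b1 ^ 2 + 2 * (b2 * (-b1 - b2)) := by
      linarith [c3, sq_nonneg b1]
    have hA : 0 ≤ ((1 - 3*a1) - 2*(2*a3 - 1 + a1)) * ((1 - 3*a1) + 2*(2*a3 - 1 + a1)) := by
      apply mul_nonneg <;> linarith
    have hB : 0 < (1 + a1) * (1 - 3*a1) := by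
      apply mul_pos <;> linarith
    linarith [hA, hB, key, hmin]
  · -- case d ≥ 2q
    have key : 2*((1 - a1 - a3) - a1)^2 - 2*((1 - a1 - a3) - a1)*(2*a3 - 1 + a1)
        - (2*a3 - 1 + a1)^2 ≤ 3*(b1 ^ 2 + 2 * (b2 * (-b1 - b2))) := by
      -- N ≥ 0 where N = 9w^2 - 3v^2 - 4q^2 + 4qd + 2d^2, w = b1, v = -b1-2b2
      rcases le_total (2*((1 - a1 - a3) - a1)) (-b1 - 2*b2) with hv | hv
      · -- v ≥ 2q : N = (2q-3w-v)(-3w+v-2q) + 2(d-v)(d+v) + 4q(d-v)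
        have h1 : 0 ≤ 2*((1 - a1 - a3) - a1) - (3*b1 + (-b1 - 2*b2)) := by linarith
        have h2 : 0 ≤ -(3*b1) + (-b1 - 2*b2) - 2*((1 - a1 - a3) - a1) := by linarith
        linarith [mul_nonneg h1 h2,
          mul_nonneg (by linarith : (0:ℝ) ≤ (2*a3 - 1 + a1) - (-b1 - 2*b2))
                     (by linarith : (0:ℝ) ≤ (2*a3 - 1 + a1) + (-b1 - 2*b2)),
          mul_nonneg (by linarith : (0:ℝ) ≤ (1 - a1 - a3) - a1)
                     (by linarith : (0:ℝ) ≤ (2*a3 - 1 + a1) - (-b1 - 2*b2))]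
      · rcases le_total (-b1 - 2*b2) (-(2*((1 - a1 - a3) - a1))) with hv2 | hv2
        · -- v ≤ -2q : N = (3w+v+2q)(3w-v-2q) + 2(d-v)(d+v) + 4q(d+v)
          have h1 : 0 ≤ 3*b1 + (-b1 - 2*b2) + 2*((1 - a1 - a3) - a1) := by linarith
          have h2 : 0 ≤ 3*b1 - (-b1 - 2*b2) - 2*((1 - a1 - a3) - a1) := by linarith
          linarith [mul_nonneg h1 h2,
            mul_nonneg (by linarith : (0:ℝ) ≤ (2*a3 - 1 + a1) - (-b1 - 2*b2))
                       (by linarith : (0:ℝ) ≤ (2*a3 - 1 + a1) + (-b1 - 2*b2)),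
            mul_nonneg (by linarith : (0:ℝ) ≤ (1 - a1 - a3) - a1)
                       (by linarith : (0:ℝ) ≤ (2*a3 - 1 + a1) + (-b1 - 2*b2))]
        · -- |v| ≤ 2q : N = 9w^2 + 3(2q-v)(2q+v) + 4q(d-2q) + 2(d-2q)(d+2q)
          linarith [sq_nonneg b1,
            mul_nonneg (by linarith : (0:ℝ) ≤ 2*((1 - a1 - a3) - a1) - (-b1 - 2*b2))
                       (by linarith : (0:ℝ) ≤ 2*((1 - a1 - a3) - a1) + (-b1 - 2*b2)),
            mul_nonneg (by linarith : (0:ℝ) ≤ (1 - a1 - a3) - a1)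
                       (by linarith : (0:ℝ) ≤ (2*a3 - 1 + a1) - 2*((1 - a1 - a3) - a1)),
            mul_nonneg (by linarith : (0:ℝ) ≤ (2*a3 - 1 + a1) - 2*((1 - a1 - a3) - a1))
                       (by linarith : (0:ℝ) ≤ (2*a3 - 1 + a1) + 2*((1 - a1 - a3) - a1))]
    -- E = (3 - 4 a3^2) + (-a1)(15 - 8 a3) + 14 a1^2 > 0
    have m1 : 0 ≤ (Real.sqrt 3 / 2 - a3) * (Real.sqrt 3 / 2 + a3) := by
      apply mul_nonneg <;> linarith
    have m2 : 0 < (-a1) * (15 - 8*a3) := by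
      apply mul_pos <;> linarith
    linarith [m1, m2, key, hmin, sq_nonneg a1, hs2]
end

section
/- Let a₁, a₂, a₃, b₁, b₂, b₃ be real numbers satisfying: a₁ ≤ a₂ ≤ a₃, a₁ + a₂ + a₃ = 1, b₁ + b₂ + b₃ = 0, |b₂ − b₁| ≤ a₂ − a₁, |b₃ − b₁| ≤ a₃ − a₁, |b₃ − b₂| ≤ a₃ − a₂, and a₁² + b₁² + 2(a₂a₃ + b₂b₃) ≤ a₁. If a₃ − a₂ = α < 2, then 4a₂ ≤ a₁ + 1 and a₁ ≥ (3 − 2α − √(1 + 8α² − 4α))/6. -/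
lemma stmt_9_key_pos (u d A C : ℝ) (h1 : (u-d)^2 ≤ A^2) (h2 : d^2 ≤ C^2)
    (hA : 0 ≤ A) (hAC : A ≤ C) (hd : 0 ≤ d) : (C-A)^2 ≤ u^2 + 3*(C^2-d^2) := by
  have hC : 0 ≤ C := le_trans hA hAC
  have hdC : d ≤ C := by nlinarith
  have hu : d - A ≤ u := by nlinarith [sq_nonneg (u - d + A)]
  rcases le_or_gt A d with h | h
  · have hu0 : (0:ℝ) ≤ u := le_trans (by linarith) hu
    nlinarith [mul_nonneg (sub_nonneg.2 hdC) (by linarith : (0:ℝ) ≤ A + d + C),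
      mul_nonneg (sub_nonneg.2 hu) (by linarith : (0:ℝ) ≤ u + (d - A))]
  · nlinarith [mul_nonneg (sub_nonneg.2 hdC) hd, sq_nonneg u,
      mul_nonneg (sub_nonneg.2 hAC) (sub_nonneg.2 h.le)]

lemma stmt_9_key (u d A C : ℝ) (h1 : (u-d)^2 ≤ A^2) (h2 : d^2 ≤ C^2)
    (hA : 0 ≤ A) (hAC : A ≤ C) : (C-A)^2 ≤ u^2 + 3*(C^2-d^2) := by
  rcases le_or_gt 0 d with h | h
  · exact stmt_9_key_pos u d A C h1 h2 hA hAC h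
  · have := stmt_9_key_pos (-u) (-d) A C (by ring_nf; ring_nf at h1; linarith)
      (by nlinarith) hA hAC (by linarith)
    nlinarith [this]

set_option maxHeartbeats 800000 in
theorem stmt_9 (a1 a2 a3 b1 b2 b3 α : ℝ)
    (h12 : a1 ≤ a2) (h23 : a2 ≤ a3) (hasum : a1 + a2 + a3 = 1)
    (hbsum : b1 + b2 + b3 = 0)
    (hb21 : |b2 - b1| ≤ a2 - a1) (hb31 : |b3 - b1| ≤ a3 - a1)
    (hb32 : |b3 - b2| ≤ a3 - a2)
    (hmin : a1 ^ 2 + b1 ^ 2 + 2 * (a2 * a3 + b2 * b3) ≤ a1)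
    (hα : a3 - a2 = α) (hα2 : α < 2) :
    4 * a2 ≤ a1 + 1 ∧
      a1 ≥ (3 - 2 * α - Real.sqrt (1 + 8 * α ^ 2 - 4 * α)) / 6 := by
  have hα0 : 0 ≤ α := by linarith
  have hd2 : (b3 - b2)^2 ≤ α^2 := by
    rw [← hα]; nlinarith [abs_le.mp hb32, sq_nonneg (b3-b2)]
  have hb1 : b1 = -b2 - b3 := by linarith
  have hpart1 : 4 * a2 ≤ a1 + 1 := by
    subst hb1
    nlinarith [sq_nonneg (b2+b3), mul_nonneg hα0 (by linarith : (0:ℝ) ≤ 2 - α),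
      sq_nonneg (4*a2 - a1 - 1), mul_nonneg hα0 hα0]
  refine ⟨hpart1, ?_⟩
  -- apply the key lemma with u = 3(b2+b3), d = b3-b2, A = 2(a2-a1), C = α
  have h1 : (3*(b2+b3) - (b3-b2))^2 ≤ (2*(a2-a1))^2 := by
    have := abs_le.mp hb21
    nlinarith [this.1, this.2]
  have hA : (0:ℝ) ≤ 2*(a2-a1) := by linarith
  have hAC : 2*(a2-a1) ≤ α := by linarith
  have hkey := stmt_9_key (3*(b2+b3)) (b3-b2) (2*(a2-a1)) α h1 hd2 hA hAC
  -- quadratic inequality in a1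
  have hQ : 9*a1^2 + (6*α - 9)*a1 + 2 - 2*α - α^2 ≤ 0 := by
    have ha3 : a3 = a2 + α := by linarith
    have ha1 : a1 = 1 - 2*a2 - α := by linarith
    subst hb1; rw [ha3] at hmin; subst ha1
    ring_nf at hkey hmin ⊢
    linarith [hkey, hmin]
  -- discriminant nonneg
  have hD : (0:ℝ) ≤ 1 + 8 * α ^ 2 - 4 * α := by nlinarith [sq_nonneg (4*α - 1)]
  rcases le_or_gt (3 - 2*α - 6*a1) 0 with h | h
  · have := Real.sqrt_nonneg (1 + 8 * α ^ 2 - 4 * α)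
    linarith [this]
  · have hsq : (3 - 2*α - 6*a1)^2 ≤ 1 + 8 * α ^ 2 - 4 * α := by nlinarith [hQ]
    have := (Real.le_sqrt h.le hD).mpr hsq
    linarith [this]
end

section
/- Let a₁, a₂, a₃, b₁, b₂, b₃ be real numbers satisfying: a₁ ≤ a₂ ≤ a₃, a₁ + a₂ + a₃ = 1, b₁ + b₂ + b₃ = 0, |b₂ − b₁| ≤ a₂ − a₁, |b₃ − b₁| ≤ a₃ − a₁, |b₃ − b₂| ≤ a₃ − a₂, and a₁² + b₁² + 2(a₂a₃ + b₂b₃) ≤ a₁. If a₃ − a₂ ≤ √3 − 1, then a₁ ≥ 0. -/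
lemma E_nonneg (A B C D : ℝ) (hA : 0 ≤ A) (hB : 0 ≤ B) (hC : 0 ≤ C) (hD : 0 ≤ D)
    (hG : 2*C + 2*D ≤ A + B) : 0 ≤ A*B + A*C + B*D - 2*C*D := by
  rcases le_total B (2*C) with h | h
  · nlinarith [mul_nonneg hA hB, mul_nonneg hB hD, mul_nonneg hC (by linarith : (0:ℝ) ≤ A - 2*D)]
  · nlinarith [mul_nonneg hA hB, mul_nonneg hA hC, mul_nonneg hD (by linarith : (0:ℝ) ≤ B - 2*C)]

theorem stmt_10 (a1 a2 a3 b1 b2 b3 : ℝ)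
    (h12 : a1 ≤ a2) (h23 : a2 ≤ a3) (hasum : a1 + a2 + a3 = 1)
    (hbsum : b1 + b2 + b3 = 0)
    (hb21 : |b2 - b1| ≤ a2 - a1) (hb31 : |b3 - b1| ≤ a3 - a1)
    (hb32 : |b3 - b2| ≤ a3 - a2)
    (hmin : a1 ^ 2 + b1 ^ 2 + 2 * (a2 * a3 + b2 * b3) ≤ a1)
    (hdiff : a3 - a2 ≤ Real.sqrt 3 - 1) :
    a1 ≥ 0 := by
  by_contra hneg
  push_neg at hneg
  have ha3 : a3 = 1 - a1 - a2 := by linarith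
  have hb1 : b1 = -b2 - b3 := by linarith
  subst ha3 hb1
  obtain ⟨h21l, h21r⟩ := abs_le.mp hb21
  obtain ⟨h31l, h31r⟩ := abs_le.mp hb31
  obtain ⟨h32l, h32r⟩ := abs_le.mp hb32
  have hs3 : Real.sqrt 3 ^ 2 = 3 := Real.sq_sqrt (by norm_num)
  have hs1 : (1:ℝ) ≤ Real.sqrt 3 := by nlinarith [Real.sqrt_nonneg 3, hs3]
  have hs2 : Real.sqrt 3 ≤ 2 := by nlinarith [Real.sqrt_nonneg 3, hs3]
  have hd0 : (0:ℝ) ≤ 1 - a1 - 2*a2 := by linarith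
  have hprod : ((1 - a1 - 2*a2) - (b3 - b2)) * ((1 - a1 - 2*a2) + (b3 - b2)) ≥ 0 :=
    mul_nonneg (by linarith) (by linarith)
  -- crude bound: 3 a1^2 - 4 a1 + 1 ≤ 2 d^2 where d = 1 - a1 - 2 a2
  have hcrude : 3*a1^2 - 4*a1 + 1 ≤ 2*(1 - a1 - 2*a2)^2 := by
    nlinarith [hmin, sq_nonneg (b2 + b3), hprod]
  have hsq : (Real.sqrt 3 - 1 - (1 - a1 - 2*a2)) * (Real.sqrt 3 - 1 + (1 - a1 - 2*a2)) ≥ 0 :=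
    mul_nonneg (by linarith) (by linarith)
  have ht1 : -1 < a1 := by nlinarith [hcrude, hsq, hs3, hs1, sq_nonneg (a1 + 1)]
  rcases le_total (1 - a1 - 2*a2) (2*(a2 - a1)) with hc | hc
  · -- case 1 : d ≤ 2p, hence 2d ≤ 1 - 3 a1
    have h2d : 2*(1 - a1 - 2*a2) ≤ 1 - 3*a1 := by linarith
    have hd2 : (2*(1 - a1 - 2*a2)) * (2*(1 - a1 - 2*a2)) ≤ (1 - 3*a1) * (1 - 3*a1) :=
      mul_self_le_mul_self (by linarith) h2d
    linarith [hcrude, hd2, mul_pos (by linarith : (0:ℝ) < -a1) (by linarith : (0:ℝ) < 1 + a1)]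
  · -- case 2 : d ≥ 2p
    have key := E_nonneg ((1 - a1 - 2*a2) - (b3-b2)) ((1 - a1 - 2*a2) + (b3-b2))
      ((a2-a1) - (b2-(-b2-b3))) ((a2-a1) + (b2-(-b2-b3)))
      (by linarith) (by linarith) (by linarith) (by linarith) (by linarith)
    have key' : 3*(b3-b2)^2 - 9*(b2+b3)^2 ≤ 2*(1 - 2*a1 - a2)^2 - 6*(a2-a1)^2 := by
      nlinarith [key]
    linarith [hmin, key', hsq, hs3,
      mul_pos (by linarith : (0:ℝ) < -a1) (by linarith : (0:ℝ) < 9 - 6*(1 - a1 - 2*a2) - 9*a1)]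
end

section
/- Let a₁, a₂, a₃, b₁, b₂, b₃ be real numbers satisfying: a₁ ≤ a₂ ≤ a₃, a₁ + a₂ + a₃ = 1, b₁ + b₂ + b₃ = 0, |b₂ − b₁| ≤ a₂ − a₁, |b₃ − b₁| ≤ a₃ − a₁, |b₃ − b₂| ≤ a₃ − a₂, and a₁² + b₁² + 2(a₂a₃ + b₂b₃) ≤ a₁. Suppose a₁ = δ ≥ 0 and a₂ ≤ (1 + δ)/4. Then 0 ≤ a₂ − a₁ ≤ 1 − 3δ − (1/2)·√(3 + 18δ² − 15δ). -/
lemma key_min (x y u v : ℝ) (hx : 0 ≤ x) (hxy : 0 ≤ y - 3*x)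
    (hu1 : -x ≤ u) (hu2 : u ≤ x) (hv1 : -y ≤ v) (hv2 : v ≤ y)
    (hd1 : -(y - x) ≤ v - u) (hd2 : v - u ≤ y - x) :
    3*x^2 - y^2 ≤ 4*u*v - u^2 - v^2 := by
  rcases le_or_gt (v - u) (2*x) with h1 | h1
  · rcases le_or_gt (-(2*x)) (v - u) with h2 | h2
    · nlinarith [mul_nonneg (by linarith : (0:ℝ) ≤ y - 3*x) (by linarith : (0:ℝ) ≤ y + 3*x),
        mul_nonneg (by linarith : (0:ℝ) ≤ 2*x - (v-u)) (by linarith : (0:ℝ) ≤ 2*x + (v-u)),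
        sq_nonneg (u+v)]
    · nlinarith [mul_nonneg (by linarith : (0:ℝ) ≤ -(u+v) - (-(v-u) - 2*x))
          (by linarith : (0:ℝ) ≤ -(u+v) + (-(v-u) - 2*x)),
        mul_nonneg (by linarith : (0:ℝ) ≤ y - (x - (v-u)) + 0)
          (by linarith : (0:ℝ) ≤ y + (x - (v-u)))]
  · nlinarith [mul_nonneg (by linarith : (0:ℝ) ≤ (u+v) - ((v-u) - 2*x))
        (by linarith : (0:ℝ) ≤ (u+v) + ((v-u) - 2*x)),
      mul_nonneg (by linarith : (0:ℝ) ≤ y - ((v-u) + x))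
        (by linarith : (0:ℝ) ≤ y + ((v-u) + x))]

theorem stmt_11 (a1 a2 a3 b1 b2 b3 δ : ℝ)
    (h12 : a1 ≤ a2) (h23 : a2 ≤ a3) (hasum : a1 + a2 + a3 = 1)
    (hbsum : b1 + b2 + b3 = 0)
    (hb21 : |b2 - b1| ≤ a2 - a1) (hb31 : |b3 - b1| ≤ a3 - a1)
    (hb32 : |b3 - b2| ≤ a3 - a2)
    (hmin : a1 ^ 2 + b1 ^ 2 + 2 * (a2 * a3 + b2 * b3) ≤ a1)
    (ha1 : a1 = δ) (hδ : δ ≥ 0) (ha2 : a2 ≤ (1 + δ) / 4) :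
    0 ≤ a2 - a1 ∧
      a2 - a1 ≤ 1 - 3 * δ - (1 / 2) * Real.sqrt (3 + 18 * δ ^ 2 - 15 * δ) := by
  subst ha1
  obtain ⟨h21a, h21b⟩ := abs_le.mp hb21
  obtain ⟨h31a, h31b⟩ := abs_le.mp hb31
  obtain ⟨h32a, h32b⟩ := abs_le.mp hb32
  have hx0 : 0 ≤ a2 - a1 := by linarith
  refine ⟨hx0, ?_⟩
  have hK := key_min (a2 - a1) (a3 - a1) (b2 - b1) (b3 - b1) hx0
    (by linarith) (by linarith) (by linarith) (by linarith) (by linarith)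
    (by linarith) (by linarith)
  have hb1 : b1 = -b2 - b3 := by linarith
  have ha3 : a3 = 1 - a1 - a2 := by linarith
  subst hb1 ha3
  have hL : 0 ≤ 2*(1 - 3*a1) - 2*(a2 - a1) := by linarith
  have hmain : 3 + 18*a1^2 - 15*a1 ≤ (2*(1 - 3*a1) - 2*(a2 - a1))^2 := by
    nlinarith [hK, hmin]
  have h1 : Real.sqrt (3 + 18*a1^2 - 15*a1) ≤ 2*(1 - 3*a1) - 2*(a2 - a1) := by
    rw [show 2*(1 - 3*a1) - 2*(a2 - a1)
        = Real.sqrt ((2*(1 - 3*a1) - 2*(a2 - a1))^2) from (Real.sqrt_sq hL).symm]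
    exact Real.sqrt_le_sqrt hmain
  linarith
end

section
/- Let a, b, c be real numbers with a + b + c = 0. Then 36·abc ≤ 2√6·(a² + b² + c²)^{3/2}. -/
theorem stmt_13 (a b c : ℝ) (h : a + b + c = 0) :
    36 * (a * b * c) ≤ 2 * Real.sqrt 6 * (a ^ 2 + b ^ 2 + c ^ 2) ^ ((3 : ℝ) / 2) := by
  have hs : (0:ℝ) ≤ a ^ 2 + b ^ 2 + c ^ 2 := by positivity
  have hc : c = -a - b := by linarith
  have key : 1296 * (a * b * c) ^ 2 ≤ 24 * (a ^ 2 + b ^ 2 + c ^ 2) ^ 3 := by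
    subst hc
    nlinarith [sq_nonneg (a - b), sq_nonneg (a + b), sq_nonneg (a*b), sq_nonneg ((a-b)*(a+b)),
      sq_nonneg ((a-b)*(2*a+b)), sq_nonneg ((a-b)*(a+2*b)), sq_nonneg (a+2*b), sq_nonneg (2*a+b),
      sq_nonneg ((a+2*b)*(2*a+b)*(a-b))]
  have hrw : (a ^ 2 + b ^ 2 + c ^ 2) ^ ((3:ℝ)/2) = Real.sqrt ((a ^ 2 + b ^ 2 + c ^ 2) ^ 3) := by
    rw [Real.sqrt_eq_rpow, ← Real.rpow_natCast (a ^ 2 + b ^ 2 + c ^ 2) 3,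
      ← Real.rpow_mul hs]
    norm_num
  rw [hrw]
  have h6 : Real.sqrt 6 * Real.sqrt ((a ^ 2 + b ^ 2 + c ^ 2) ^ 3)
      = Real.sqrt (6 * (a ^ 2 + b ^ 2 + c ^ 2) ^ 3) := by
    rw [← Real.sqrt_mul (by norm_num : (0:ℝ) ≤ 6)]
  rw [mul_assoc 2, h6]
  rcases le_or_gt (36 * (a * b * c)) 0 with hneg | hpos
  · exact hneg.trans (by positivity)
  · have := Real.le_sqrt hpos.le (y := 6 * (a ^ 2 + b ^ 2 + c ^ 2) ^ 3)
    nlinarith [Real.sq_sqrt (show (0:ℝ) ≤ 6 * (a ^ 2 + b ^ 2 + c ^ 2) ^ 3 by positivity),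
      Real.sqrt_nonneg (6 * (a ^ 2 + b ^ 2 + c ^ 2) ^ 3)]
end
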